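/- Suboptimality of the model-optimal strategy in the true system: under the hypotheses of the value-closeness lemma (per-step expected reward error ≤ ε_r and per-step expected increment-kernel ℓ₁ error ≤ ε_z for every strategy) and letting ĝ* be the strategy produced by backward induction in the approximate model M, for every strategy g one has J_true(g) − J_true(ĝ*) ≤ 2H·ε_r + H²·ε_z, where J_true(g) = V_1^{g,true}(∅). Hence ĝ* is (2Hε_r + H²ε_z)-optimal for the true problem. -/

import Mathlib

/-- Suboptimality of the model-optimal strategy in the true system: under per-step
expected reward error ≤ ε_r and increment-kernel ℓ₁ error ≤ ε_z (for every strategy),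
the strategy ghat* produced by backward induction in the approximate model is
(2H ε_r + H² ε_z)-optimal for the true problem. -/
theorem stmt9 {C Z Γ Chat : Type*} [Fintype C] [Fintype Z] [Fintype Γ] [DecidableEq C]
    (H : ℕ) (hH : 1 ≤ H)
    (ext : C → Z → C) (c₀ : C)
    (r : ℕ → C → Γ → ℝ) (P : ℕ → C → Γ → Z → ℝ)
    (compress : ℕ → C → Chat) (φhat : ℕ → Chat → Z → Chat)
    (hcompat : ∀ h c z, compress (h + 1) (ext c z) = φhat h (compress h c) z)
    (rhat : ℕ → Chat → Γ → ℝ) (Phat : ℕ → Chat → Γ → Z → ℝ)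
    (hr : ∀ h c γ, |r h c γ| ≤ 1) (hrhat : ∀ h ch γ, |rhat h ch γ| ≤ 1)
    (hP0 : ∀ h c γ z, 0 ≤ P h c γ z) (hP1 : ∀ h c γ, ∑ z, P h c γ z = 1)
    (hPhat0 : ∀ h ch γ z, 0 ≤ Phat h ch γ z) (hPhat1 : ∀ h ch γ, ∑ z, Phat h ch γ z = 1)
    (εr εz : ℝ)
    -- occupancy measure over common information of the true process under a strategy
    (d : (ℕ → C → Γ) → ℕ → C → ℝ)
    (hd1 : ∀ g c, d g 1 c = if c = c₀ then 1 else 0)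
    (hdrec : ∀ g h c', d g (h + 1) c' =
        ∑ c, ∑ z, (if ext c z = c' then d g h c * P h c (g h c) z else 0))
    -- per-step expected approximation errors, for every strategy
    (herr_r : ∀ g h, 1 ≤ h → h ≤ H →
        ∑ c, d g h c * |r h c (g h c) - rhat h (compress h c) (g h c)| ≤ εr)
    (herr_z : ∀ g h, 1 ≤ h → h ≤ H →
        ∑ c, d g h c *
          (∑ z, |P h c (g h c) z - Phat h (compress h c) (g h c) z|) ≤ εz)
    -- true and model value functions of a strategy
    (Vtrue Vmodel : (ℕ → C → Γ) → ℕ → C → ℝ)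
    (hVtrue_end : ∀ g c, Vtrue g (H + 1) c = 0)
    (hVmodel_end : ∀ g c, Vmodel g (H + 1) c = 0)
    (hVtrue : ∀ g h c, 1 ≤ h → h ≤ H →
        Vtrue g h c = r h c (g h c) + ∑ z, P h c (g h c) z * Vtrue g (h + 1) (ext c z))
    (hVmodel : ∀ g h c, 1 ≤ h → h ≤ H →
        Vmodel g h c = rhat h (compress h c) (g h c) +
          ∑ z, Phat h (compress h c) (g h c) z * Vmodel g (h + 1) (ext c z))
    -- backward induction in the approximate model
    (Qstar : ℕ → Chat → Γ → ℝ) (Vstar : ℕ → Chat → ℝ) (gstar : ℕ → Chat → Γ)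
    (hVend : ∀ ch, Vstar (H + 1) ch = 0)
    (hQ : ∀ h ch γ, 1 ≤ h → h ≤ H →
        Qstar h ch γ = rhat h ch γ + ∑ z, Phat h ch γ z * Vstar (h + 1) (φhat h ch z))
    (hargmax : ∀ h ch γ, 1 ≤ h → h ≤ H → Qstar h ch γ ≤ Qstar h ch (gstar h ch))
    (hV : ∀ h ch, 1 ≤ h → h ≤ H → Vstar h ch = Qstar h ch (gstar h ch)) :
    ∀ g : ℕ → C → Γ,
      Vtrue g 1 c₀ - Vtrue (fun h' c' => gstar h' (compress h' c')) 1 c₀ ≤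
        2 * (H : ℝ) * εr + (H : ℝ) ^ 2 * εz := by
  intro g
  set ghat : ℕ → C → Γ := fun h' c' => gstar h' (compress h' c') with hghat
  -- nonnegativity of the occupancy measure
  have hd_nonneg : ∀ g' h, 1 ≤ h → ∀ c, 0 ≤ d g' h c := by
    intro g' h hh
    induction h, hh using Nat.le_induction with
    | base =>
      intro c; rw [hd1]; split <;> norm_num
    | succ h hh ih =>
      intro c'
      rw [hdrec]
      refine Finset.sum_nonneg fun c _ => Finset.sum_nonneg fun z _ => ?_
      split
      · exact mul_nonneg (ih c) (hP0 _ _ _ _)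
      · exact le_refl 0
  have hεz : 0 ≤ εz := by
    refine le_trans ?_ (herr_z g 1 le_rfl hH)
    refine Finset.sum_nonneg fun c _ => mul_nonneg (hd_nonneg g 1 le_rfl c)
      (Finset.sum_nonneg fun z _ => abs_nonneg _)
  -- bound on the model value function
  have hVm_bd : ∀ g' n h, 1 ≤ h → h + n = H + 1 → ∀ c, |Vmodel g' h c| ≤ (n : ℝ) := by
    intro g' n
    induction n with
    | zero =>
      intro h h1 hhn c
      have : h = H + 1 := by omega
      subst this
      simp [hVmodel_end]
    | succ n ih =>
      intro h h1 hhn c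
      have hhH : h ≤ H := by omega
      rw [hVmodel g' h c h1 hhH]
      have hsum : |∑ z, Phat h (compress h c) (g' h c) z * Vmodel g' (h + 1) (ext c z)|
          ≤ (n : ℝ) := by
        calc |∑ z, Phat h (compress h c) (g' h c) z * Vmodel g' (h + 1) (ext c z)|
            ≤ ∑ z, |Phat h (compress h c) (g' h c) z * Vmodel g' (h + 1) (ext c z)| :=
              Finset.abs_sum_le_sum_abs _ _
          _ ≤ ∑ z, Phat h (compress h c) (g' h c) z * (n : ℝ) := by
              refine Finset.sum_le_sum fun z _ => ?_
              rw [abs_mul, abs_of_nonneg (hPhat0 _ _ _ _)]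
              exact mul_le_mul_of_nonneg_left
                (ih (h + 1) (by omega) (by omega) (ext c z)) (hPhat0 _ _ _ _)
          _ = (n : ℝ) := by rw [← Finset.sum_mul, hPhat1, one_mul]
      calc |rhat h (compress h c) (g' h c) +
            ∑ z, Phat h (compress h c) (g' h c) z * Vmodel g' (h + 1) (ext c z)|
          ≤ |rhat h (compress h c) (g' h c)| +
            |∑ z, Phat h (compress h c) (g' h c) z * Vmodel g' (h + 1) (ext c z)| :=
            abs_add_le _ _
        _ ≤ 1 + (n : ℝ) := add_le_add (hrhat _ _ _) hsum
        _ = ((n + 1 : ℕ) : ℝ) := by push_cast; ring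
  -- the key value-closeness bound, in expectation under the occupancy measure
  have key : ∀ g' n h, 1 ≤ h → h + n = H + 1 →
      ∑ c, d g' h c * |Vtrue g' h c - Vmodel g' h c| ≤
        (n : ℝ) * εr + (n : ℝ) ^ 2 / 2 * εz := by
    intro g' n
    induction n with
    | zero =>
      intro h h1 hhn
      have : h = H + 1 := by omega
      subst this
      simp [hVtrue_end, hVmodel_end]
    | succ n ih =>
      intro h h1 hhn
      have hhH : h ≤ H := by omega
      -- pointwise decomposition
      have hstep : ∀ c, |Vtrue g' h c - Vmodel g' h c| ≤
          |r h c (g' h c) - rhat h (compress h c) (g' h c)|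
          + (∑ z, |P h c (g' h c) z - Phat h (compress h c) (g' h c) z|) * (n : ℝ)
          + ∑ z, P h c (g' h c) z *
              |Vtrue g' (h + 1) (ext c z) - Vmodel g' (h + 1) (ext c z)| := by
        intro c
        have hre : Vtrue g' h c - Vmodel g' h c =
            (r h c (g' h c) - rhat h (compress h c) (g' h c))
            + (∑ z, (P h c (g' h c) z - Phat h (compress h c) (g' h c) z) *
                Vmodel g' (h + 1) (ext c z))
            + ∑ z, P h c (g' h c) z *
                (Vtrue g' (h + 1) (ext c z) - Vmodel g' (h + 1) (ext c z)) := by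
          have expand : (∑ z, (P h c (g' h c) z - Phat h (compress h c) (g' h c) z) *
                Vmodel g' (h + 1) (ext c z))
              + (∑ z, P h c (g' h c) z *
                  (Vtrue g' (h + 1) (ext c z) - Vmodel g' (h + 1) (ext c z)))
              = (∑ z, P h c (g' h c) z * Vtrue g' (h + 1) (ext c z))
                - ∑ z, Phat h (compress h c) (g' h c) z * Vmodel g' (h + 1) (ext c z) := by
            rw [← Finset.sum_add_distrib, ← Finset.sum_sub_distrib]
            exact Finset.sum_congr rfl fun z _ => by ring
          rw [hVtrue g' h c h1 hhH, hVmodel g' h c h1 hhH]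
          linarith [expand]
        rw [hre]
        refine le_trans (abs_add_le _ _) ?_
        refine le_trans (add_le_add_left (abs_add_le _ _) _) ?_
        refine add_le_add (add_le_add_right ?_ _) (le_trans (Finset.abs_sum_le_sum_abs _ _) ?_)
        · refine le_trans (Finset.abs_sum_le_sum_abs _ _) ?_
          rw [Finset.sum_mul]
          refine Finset.sum_le_sum fun z _ => ?_
          rw [abs_mul]
          exact mul_le_mul_of_nonneg_left
            (hVm_bd g' n (h + 1) (by omega) (by omega) (ext c z)) (abs_nonneg _)
        · refine Finset.sum_le_sum fun z _ => ?_
          rw [abs_mul, abs_of_nonneg (hP0 _ _ _ _)]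
      -- reindexing the last term through the occupancy recursion
      have hre3 : ∑ c, d g' h c * ∑ z, P h c (g' h c) z *
            |Vtrue g' (h + 1) (ext c z) - Vmodel g' (h + 1) (ext c z)|
          = ∑ c', d g' (h + 1) c' * |Vtrue g' (h + 1) c' - Vmodel g' (h + 1) c'| := by
        symm
        simp only [hdrec, Finset.sum_mul, ite_mul, zero_mul]
        rw [Finset.sum_comm]
        refine Finset.sum_congr rfl fun c _ => ?_
        rw [Finset.sum_comm, Finset.mul_sum]
        refine Finset.sum_congr rfl fun z _ => ?_
        rw [Finset.sum_ite_eq]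
        simp [mul_assoc]
      calc ∑ c, d g' h c * |Vtrue g' h c - Vmodel g' h c|
          ≤ ∑ c, d g' h c *
              (|r h c (g' h c) - rhat h (compress h c) (g' h c)|
              + (∑ z, |P h c (g' h c) z - Phat h (compress h c) (g' h c) z|) * (n : ℝ)
              + ∑ z, P h c (g' h c) z *
                  |Vtrue g' (h + 1) (ext c z) - Vmodel g' (h + 1) (ext c z)|) := by
            exact Finset.sum_le_sum fun c _ =>
              mul_le_mul_of_nonneg_left (hstep c) (hd_nonneg g' h h1 c)
        _ = (∑ c, d g' h c * |r h c (g' h c) - rhat h (compress h c) (g' h c)|)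
            + (∑ c, d g' h c *
                (∑ z, |P h c (g' h c) z - Phat h (compress h c) (g' h c) z|)) * (n : ℝ)
            + ∑ c, d g' h c * ∑ z, P h c (g' h c) z *
                |Vtrue g' (h + 1) (ext c z) - Vmodel g' (h + 1) (ext c z)| := by
            rw [Finset.sum_mul, ← Finset.sum_add_distrib, ← Finset.sum_add_distrib]
            refine Finset.sum_congr rfl fun c _ => by ring
        _ ≤ εr + εz * (n : ℝ) + ((n : ℝ) * εr + (n : ℝ) ^ 2 / 2 * εz) := by
            refine add_le_add (add_le_add (herr_r g' h h1 hhH)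
              (mul_le_mul_of_nonneg_right (herr_z g' h h1 hhH) (by positivity))) ?_
            rw [hre3]
            exact ih (h + 1) (by omega) (by omega)
        _ ≤ ((n + 1 : ℕ) : ℝ) * εr + ((n + 1 : ℕ) : ℝ) ^ 2 / 2 * εz := by
            push_cast
            nlinarith [hεz, sq_nonneg ((n : ℝ))]
  -- model-optimality of ghat
  have hopt_eq : ∀ n h, 1 ≤ h → h + n = H + 1 → ∀ c,
      Vmodel ghat h c = Vstar h (compress h c) := by
    intro n
    induction n with
    | zero =>
      intro h h1 hhn c
      have : h = H + 1 := by omega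
      subst this
      rw [hVmodel_end, hVend]
    | succ n ih =>
      intro h h1 hhn c
      have hhH : h ≤ H := by omega
      rw [hVmodel ghat h c h1 hhH, hV h _ h1 hhH, hQ h _ _ h1 hhH]
      congr 1
      refine Finset.sum_congr rfl fun z _ => ?_
      rw [ih (h + 1) (by omega) (by omega) (ext c z), hcompat]
  have hopt_le : ∀ g' n h, 1 ≤ h → h + n = H + 1 → ∀ c,
      Vmodel g' h c ≤ Vstar h (compress h c) := by
    intro g' n
    induction n with
    | zero =>
      intro h h1 hhn c
      have : h = H + 1 := by omega
      subst this
      rw [hVmodel_end, hVend]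
    | succ n ih =>
      intro h h1 hhn c
      have hhH : h ≤ H := by omega
      rw [hVmodel g' h c h1 hhH, hV h _ h1 hhH]
      refine le_trans ?_ (hargmax h (compress h c) (g' h c) h1 hhH)
      rw [hQ h _ _ h1 hhH]
      refine add_le_add_right (Finset.sum_le_sum fun z _ => ?_) _
      rw [← hcompat]
      exact mul_le_mul_of_nonneg_left
        (ih (h + 1) (by omega) (by omega) (ext c z)) (hPhat0 _ _ _ _)
  -- collapse the expectation at h = 1 to the single point c₀
  have e1 : ∀ g', ∑ c, d g' 1 c * |Vtrue g' 1 c - Vmodel g' 1 c|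
      = |Vtrue g' 1 c₀ - Vmodel g' 1 c₀| := by
    intro g'
    simp [hd1, ite_mul]
  have kg := key g H 1 le_rfl (by omega)
  have kghat := key ghat H 1 le_rfl (by omega)
  rw [e1] at kg kghat
  have heq := hopt_eq H 1 le_rfl (by omega) c₀
  have hle := hopt_le g H 1 le_rfl (by omega) c₀
  have h1 : Vtrue g 1 c₀ - Vmodel g 1 c₀ ≤ |Vtrue g 1 c₀ - Vmodel g 1 c₀| := le_abs_self _
  have h2 : Vmodel ghat 1 c₀ - Vtrue ghat 1 c₀ ≤ |Vtrue ghat 1 c₀ - Vmodel ghat 1 c₀| := by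
    rw [abs_sub_comm]; exact le_abs_self _
  show Vtrue g 1 c₀ - Vtrue ghat 1 c₀ ≤ 2 * (H : ℝ) * εr + (H : ℝ) ^ 2 * εz
  nlinarith [kg, kghat, heq, hle, h1, h2]
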